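/- The q-binomial theorem: in the polynomial ring ℤ[x,y,q], the identity ∏_{k=0}^{n-1} (x + q^k·y) = ∑_{k=0}^{n} q^(k(k-1)/2) · binom(n,k)_q · x^(n-k) · y^k holds for every natural number n. -/

import Mathlib

/-!
The q-binomial theorem in `ℤ[x,y,q]`:
`∏_{k=0}^{n-1} (x + q^k y) = ∑_{k=0}^n q^(k(k-1)/2) binom(n,k)_q x^(n-k) y^k`.

The Gaussian binomial coefficient is characterized by its defining formula
`binom(n,k)_q = [n]!_q / ([n-k]!_q ⬝ [k]!_q)` in the fraction field `ℚ(q)` of `ℤ[q]`;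
we quantify over any family `B : ℕ → ℕ → ℤ[q]` satisfying this property.
-/

/-- The image of the variable `q` in the fraction field of `ℤ[q]`. -/
noncomputable def qq : FractionRing (Polynomial ℤ) :=
  algebraMap (Polynomial ℤ) (FractionRing (Polynomial ℤ)) Polynomial.X

/-- The q-bracket `[n]_q = 1 + q + ... + q^(n-1)`. -/
noncomputable def qBracket (n : ℕ) : FractionRing (Polynomial ℤ) :=
  ∑ i ∈ Finset.range n, qq ^ i

/-- The q-factorial `[n]!_q = [1]_q ⬝ [2]_q ⬝ ... ⬝ [n]_q`. -/
noncomputable def qFactorial (n : ℕ) : FractionRing (Polynomial ℤ) :=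
  ∏ i ∈ Finset.range n, qBracket (i + 1)

set_option synthInstance.maxHeartbeats 1000000
set_option maxHeartbeats 1000000

noncomputable def G : ℕ → ℕ → Polynomial ℤ
  | 0, 0 => 1
  | 0, _+1 => 0
  | _+1, 0 => 1
  | n+1, k+1 => G n (k+1) + Polynomial.X ^ (n - k) * G n k

lemma qBracket_eq (n : ℕ) : qBracket n =
    algebraMap (Polynomial ℤ) (FractionRing (Polynomial ℤ)) (∑ i ∈ Finset.range n, Polynomial.X ^ i) := by
  simp [qBracket, qq, map_sum]

lemma qBracket_ne_zero (n : ℕ) (h : 0 < n) : qBracket n ≠ 0 := by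
  rw [qBracket_eq]
  intro h0
  have hz : (∑ i ∈ Finset.range n, (Polynomial.X : Polynomial ℤ) ^ i) = 0 :=
    IsFractionRing.injective (Polynomial ℤ) (FractionRing (Polynomial ℤ)) (by simpa using h0)
  have := congrArg (Polynomial.eval 1) hz
  simp [Polynomial.eval_finset_sum] at this
  omega

lemma qFactorial_ne_zero (n : ℕ) : qFactorial n ≠ 0 := by
  apply Finset.prod_ne_zero_iff.mpr
  intro i _
  exact qBracket_ne_zero _ (Nat.succ_pos i)

lemma qBracket_add (a b : ℕ) : qBracket (a + b) = qBracket a + qq ^ a * qBracket b := by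
  simp only [qBracket, Finset.sum_range_add, pow_add, Finset.mul_sum]

lemma qFactorial_succ (n : ℕ) : qFactorial (n + 1) = qFactorial n * qBracket (n + 1) := by
  simp [qFactorial, Finset.prod_range_succ]

lemma G_eq_zero : ∀ n k : ℕ, n < k → G n k = 0
  | 0, _+1, _ => rfl
  | n+1, k+1, h => by
    rw [show G (n+1) (k+1) = G n (k+1) + Polynomial.X ^ (n-k) * G n k from rfl,
      G_eq_zero n (k+1) (by omega), G_eq_zero n k (by omega)]
    ring

lemma G_frac : ∀ n k : ℕ, k ≤ n →
    algebraMap (Polynomial ℤ) (FractionRing (Polynomial ℤ)) (G n k) =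
      qFactorial n / (qFactorial (n - k) * qFactorial k)
  | 0, 0, _ => by simp [G, qFactorial]
  | n+1, 0, _ => by
    rw [show G (n+1) 0 = 1 from rfl, map_one, Nat.sub_zero,
      show qFactorial 0 = 1 from rfl, mul_one, div_self (qFactorial_ne_zero (n+1))]
  | n+1, k+1, h => by
    have hk : k ≤ n := Nat.lt_succ_iff.mp h
    rw [show G (n+1) (k+1) = G n (k+1) + Polynomial.X ^ (n - k) * G n k from rfl, map_add,
      map_mul, map_pow, G_frac n k hk]
    have hX : algebraMap (Polynomial ℤ) (FractionRing (Polynomial ℤ)) Polynomial.X = qq := rfl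
    rw [hX]
    rcases eq_or_lt_of_le hk with rfl | hlt
    · rw [G_eq_zero k (k+1) (by omega), map_zero, zero_add]
      simp only [Nat.sub_self, Nat.add_sub_cancel]
      rw [qFactorial_succ]
      field_simp [qFactorial_ne_zero, qBracket_ne_zero]
    · have hk1 : k + 1 ≤ n := hlt
      rw [G_frac n (k+1) hk1]
      have key : qBracket (n + 1) = qBracket (n - k) + qq ^ (n - k) * qBracket (k + 1) := by
        rw [← qBracket_add]; congr 1; omega
      have e1 : n + 1 - (k + 1) = n - k := by omega
      have e2 : n - (k+1) + 1 = n - k := by omega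
      rw [e1, qFactorial_succ n, qFactorial_succ k, ← e2, qFactorial_succ (n - (k+1)), e2, key]
      have h1 := qFactorial_ne_zero (n - (k+1))
      have h2 := qFactorial_ne_zero k
      have h3 := qBracket_ne_zero (n - k) (by omega)
      have h4 := qBracket_ne_zero (k + 1) (by omega)
      field_simp

lemma G_n_zero (n : ℕ) : G n 0 = 1 := by cases n <;> rfl

lemma tri (k : ℕ) : k * (k + 1) / 2 = k * (k - 1) / 2 + k := by
  cases k with
  | zero => rfl
  | succ m =>
    have h : (m+1) * (m+1+1) = (m+1) * ((m+1) - 1) + (m+1) * 2 := by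
      simp only [Nat.add_sub_cancel]; ring
    rw [h, Nat.add_mul_div_right _ _ (by norm_num : (0:ℕ) < 2)]

open MvPolynomial in
lemma main_G (n : ℕ) :
    ∏ k ∈ Finset.range n, ((X 0 : MvPolynomial (Fin 3) ℤ) + X 2 ^ k * X 1) =
      ∑ k ∈ Finset.range (n + 1),
        (X 2 : MvPolynomial (Fin 3) ℤ) ^ (k * (k - 1) / 2) *
          Polynomial.aeval (X 2 : MvPolynomial (Fin 3) ℤ) (G n k) *
          X 0 ^ (n - k) * X 1 ^ k := by
  induction n with
  | zero => simp [G]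
  | succ n ih =>
    rw [Finset.prod_range_succ, ih, mul_add, Finset.sum_mul, Finset.sum_mul]
    have hA : (∑ k ∈ Finset.range (n+1),
          (X 2 : MvPolynomial (Fin 3) ℤ) ^ (k*(k-1)/2) *
            Polynomial.aeval (X 2 : MvPolynomial (Fin 3) ℤ) (G n k) * X 0^(n-k) * X 1^k * X 0)
        = ∑ k ∈ Finset.range (n+2),
          (X 2 : MvPolynomial (Fin 3) ℤ) ^ (k*(k-1)/2) *
            Polynomial.aeval (X 2 : MvPolynomial (Fin 3) ℤ) (G n k) * X 0^(n+1-k) * X 1^k := by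
      conv_rhs => rw [Finset.sum_range_succ]
      rw [G_eq_zero n (n+1) (by omega)]
      simp only [map_zero, mul_zero, zero_mul, add_zero]
      apply Finset.sum_congr rfl
      intro k hk
      have hk' : k ≤ n := by have := Finset.mem_range.mp hk; omega
      have h1 : n + 1 - k = (n - k) + 1 := by omega
      rw [h1, pow_succ]
      ring
    have hB : (∑ k ∈ Finset.range (n+1),
          (X 2 : MvPolynomial (Fin 3) ℤ) ^ (k*(k-1)/2) *
            Polynomial.aeval (X 2 : MvPolynomial (Fin 3) ℤ) (G n k) * X 0^(n-k) * X 1^k *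
              ((X 2:MvPolynomial (Fin 3) ℤ)^n * X 1))
        = ∑ k ∈ Finset.range (n+1),
          (X 2 : MvPolynomial (Fin 3) ℤ) ^ (k*(k+1)/2 + (n-k)) *
            Polynomial.aeval (X 2 : MvPolynomial (Fin 3) ℤ) (G n k) * X 0^(n-k) * X 1^(k+1) := by
      apply Finset.sum_congr rfl
      intro k hk
      have hk' : k ≤ n := by have := Finset.mem_range.mp hk; omega
      have h1 : k*(k+1)/2 + (n-k) = k*(k-1)/2 + n := by
        rw [tri]; omega
      rw [h1, pow_add, pow_succ]
      ring
    rw [hA, hB]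
    rw [Finset.sum_range_succ' _ (n+1),
        Finset.sum_range_succ' (fun k => (X 2 : MvPolynomial (Fin 3) ℤ) ^ (k * (k - 1) / 2) *
          Polynomial.aeval (X 2 : MvPolynomial (Fin 3) ℤ) (G (n+1) k) *
          X 0 ^ (n + 1 - k) * X 1 ^ k) (n+1)]
    simp only [G_n_zero, map_one, Nat.zero_mul, Nat.zero_sub, Nat.sub_zero, pow_zero, mul_one,
      one_mul, Nat.zero_div]
    rw [add_right_comm, ← Finset.sum_add_distrib]
    congr 1
    apply Finset.sum_congr rfl
    intro j hj
    have hj' : j ≤ n := by have := Finset.mem_range.mp hj; omega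
    rw [show G (n+1) (j+1) = G n (j+1) + Polynomial.X ^ (n - j) * G n j from rfl]
    simp only [map_add, map_mul, map_pow, Polynomial.aeval_X]
    have h2 : (j+1) * ((j+1) - 1) / 2 = j * (j+1) / 2 := by
      simp [Nat.add_sub_cancel, Nat.mul_comm]
    have h3 : n + 1 - (j + 1) = n - j := by omega
    rw [h2, h3, pow_add]
    ring

open MvPolynomial in
/-- The q-binomial theorem: in `ℤ[x,y,q]` (with `x = X 0`, `y = X 1`, `q = X 2`),
`∏_{k=0}^{n-1} (x + q^k y) = ∑_{k=0}^{n} q^(k(k-1)/2) ⬝ binom(n,k)_q ⬝ x^(n-k) ⬝ y^k`,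
where `B n k ∈ ℤ[q]` is the Gaussian binomial coefficient, characterized by
`B n k = [n]!_q / ([n-k]!_q [k]!_q)` in `ℚ(q)`. -/
theorem q_binomial_theorem (B : ℕ → ℕ → Polynomial ℤ)
    (hB : ∀ n k : ℕ, k ≤ n →
      algebraMap (Polynomial ℤ) (FractionRing (Polynomial ℤ)) (B n k) =
        qFactorial n / (qFactorial (n - k) * qFactorial k))
    (n : ℕ) :
    ∏ k ∈ Finset.range n, ((X 0 : MvPolynomial (Fin 3) ℤ) + X 2 ^ k * X 1) =
      ∑ k ∈ Finset.range (n + 1),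
        (X 2 : MvPolynomial (Fin 3) ℤ) ^ (k * (k - 1) / 2) *
          Polynomial.aeval (X 2 : MvPolynomial (Fin 3) ℤ) (B n k) *
          X 0 ^ (n - k) * X 1 ^ k := by
  rw [main_G]
  apply Finset.sum_congr rfl
  intro k hk
  have hk' : k ≤ n := by have := Finset.mem_range.mp hk; omega
  have : B n k = G n k := by
    apply IsFractionRing.injective (Polynomial ℤ) (FractionRing (Polynomial ℤ))
    rw [hB n k hk', G_frac n k hk']
  rw [this]
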